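/- The maximum size of a set of pairwise non-commuting elements of the symmetric group S₅ (equivalently PGL(2,5)) is 31. -/

import Mathlib

/-- A finset of group elements is pairwise non-commuting. -/
def pwNC {G : Type*} [Group G] (s : Finset G) : Prop :=
  (s : Set G).Pairwise fun a b => a * b ≠ b * a

/-- ω(G): the maximum size of a set of pairwise non-commuting elements of `G`. -/
noncomputable def omegaNC (G : Type*) [Group G] : ℕ :=
  sSup {n : ℕ | ∃ s : Finset G, pwNC s ∧ s.card = n}

/-- Build a permutation of `Fin 5` from explicit tables. -/
def pp (v w : Fin 5 → Fin 5) (h1 : Function.LeftInverse w v := by decide)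
    (h2 : Function.RightInverse w v := by decide) : Equiv.Perm (Fin 5) := ⟨v, w, h1, h2⟩

/-- 31 abelian subsets covering S₅ (the maximal cyclic subgroups of orders 6, 4, 5). -/
def cents : List (List (Equiv.Perm (Fin 5))) :=
[[pp ![0,1,2,3,4] ![0,1,2,3,4], pp ![1,0,2,3,4] ![1,0,2,3,4], pp ![0,1,4,2,3] ![0,1,3,4,2], pp ![1,0,4,2,3] ![1,0,3,4,2], pp ![0,1,3,4,2] ![0,1,4,2,3], pp ![1,0,3,4,2] ![1,0,4,2,3]],
[pp ![0,1,2,3,4] ![0,1,2,3,4], pp ![2,1,0,3,4] ![2,1,0,3,4], pp ![0,4,2,1,3] ![0,3,2,4,1], pp ![2,4,0,1,3] ![2,3,0,4,1], pp ![0,3,2,4,1] ![0,4,2,1,3], pp ![2,3,0,4,1] ![2,4,0,1,3]],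
[pp ![0,1,2,3,4] ![0,1,2,3,4], pp ![3,1,2,0,4] ![3,1,2,0,4], pp ![3,2,4,0,1] ![3,4,1,0,2], pp ![0,2,4,3,1] ![0,4,1,3,2], pp ![3,4,1,0,2] ![3,2,4,0,1], pp ![0,4,1,3,2] ![0,2,4,3,1]],
[pp ![0,1,2,3,4] ![0,1,2,3,4], pp ![0,3,1,2,4] ![0,2,3,1,4], pp ![0,2,3,1,4] ![0,3,1,2,4], pp ![4,2,3,1,0] ![4,3,1,2,0], pp ![4,1,2,3,0] ![4,1,2,3,0], pp ![4,3,1,2,0] ![4,2,3,1,0]],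
[pp ![0,1,2,3,4] ![0,1,2,3,4], pp ![0,2,1,3,4] ![0,2,1,3,4], pp ![3,2,1,4,0] ![4,2,1,0,3], pp ![3,1,2,4,0] ![4,1,2,0,3], pp ![4,1,2,0,3] ![3,1,2,4,0], pp ![4,2,1,0,3] ![3,2,1,4,0]],
[pp ![0,1,2,3,4] ![0,1,2,3,4], pp ![0,3,2,1,4] ![0,3,2,1,4], pp ![2,3,4,1,0] ![4,3,0,1,2], pp ![2,1,4,3,0] ![4,1,0,3,2], pp ![4,3,0,1,2] ![2,3,4,1,0], pp ![4,1,0,3,2] ![2,1,4,3,0]],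
[pp ![0,1,2,3,4] ![0,1,2,3,4], pp ![2,1,3,0,4] ![3,1,0,2,4], pp ![3,1,0,2,4] ![2,1,3,0,4], pp ![3,4,0,2,1] ![2,4,3,0,1], pp ![0,4,2,3,1] ![0,4,2,3,1], pp ![2,4,3,0,1] ![3,4,0,2,1]],
[pp ![0,1,2,3,4] ![0,1,2,3,4], pp ![0,1,3,2,4] ![0,1,3,2,4], pp ![1,4,2,3,0] ![4,0,2,3,1], pp ![1,4,3,2,0] ![4,0,3,2,1], pp ![4,0,3,2,1] ![1,4,3,2,0], pp ![4,0,2,3,1] ![1,4,2,3,0]],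
[pp ![0,1,2,3,4] ![0,1,2,3,4], pp ![1,3,2,0,4] ![3,0,2,1,4], pp ![3,0,2,1,4] ![1,3,2,0,4], pp ![3,0,4,1,2] ![1,3,4,0,2], pp ![0,1,4,3,2] ![0,1,4,3,2], pp ![1,3,4,0,2] ![3,0,4,1,2]],
[pp ![0,1,2,3,4] ![0,1,2,3,4], pp ![1,2,0,3,4] ![2,0,1,3,4], pp ![2,0,1,3,4] ![1,2,0,3,4], pp ![0,1,2,4,3] ![0,1,2,4,3], pp ![1,2,0,4,3] ![2,0,1,4,3], pp ![2,0,1,4,3] ![1,2,0,4,3]],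
[pp ![0,1,2,3,4] ![0,1,2,3,4], pp ![1,2,3,0,4] ![3,0,1,2,4], pp ![3,0,1,2,4] ![1,2,3,0,4], pp ![2,3,0,1,4] ![2,3,0,1,4]],
[pp ![0,1,2,3,4] ![0,1,2,3,4], pp ![3,2,1,0,4] ![3,2,1,0,4], pp ![1,3,0,2,4] ![2,0,3,1,4], pp ![2,0,3,1,4] ![1,3,0,2,4]],
[pp ![0,1,2,3,4] ![0,1,2,3,4], pp ![2,3,1,0,4] ![3,2,0,1,4], pp ![1,0,3,2,4] ![1,0,3,2,4], pp ![3,2,0,1,4] ![2,3,1,0,4]],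
[pp ![0,1,2,3,4] ![0,1,2,3,4], pp ![1,2,4,3,0] ![4,0,1,3,2], pp ![2,4,0,3,1] ![2,4,0,3,1], pp ![4,0,1,3,2] ![1,2,4,3,0]],
[pp ![0,1,2,3,4] ![0,1,2,3,4], pp ![4,2,1,3,0] ![4,2,1,3,0], pp ![2,0,4,3,1] ![1,4,0,3,2], pp ![1,4,0,3,2] ![2,0,4,3,1]],
[pp ![0,1,2,3,4] ![0,1,2,3,4], pp ![2,4,1,3,0] ![4,2,0,3,1], pp ![4,2,0,3,1] ![2,4,1,3,0], pp ![1,0,4,3,2] ![1,0,4,3,2]],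
[pp ![0,1,2,3,4] ![0,1,2,3,4], pp ![1,3,2,4,0] ![4,0,2,1,3], pp ![4,0,2,1,3] ![1,3,2,4,0], pp ![3,4,2,0,1] ![3,4,2,0,1]],
[pp ![0,1,2,3,4] ![0,1,2,3,4], pp ![4,3,2,1,0] ![4,3,2,1,0], pp ![1,4,2,0,3] ![3,0,2,4,1], pp ![3,0,2,4,1] ![1,4,2,0,3]],
[pp ![0,1,2,3,4] ![0,1,2,3,4], pp ![3,4,2,1,0] ![4,3,2,0,1], pp ![1,0,2,4,3] ![1,0,2,4,3], pp ![4,3,2,0,1] ![3,4,2,1,0]],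
[pp ![0,1,2,3,4] ![0,1,2,3,4], pp ![2,1,3,4,0] ![4,1,0,2,3], pp ![4,1,0,2,3] ![2,1,3,4,0], pp ![3,1,4,0,2] ![3,1,4,0,2]],
[pp ![0,1,2,3,4] ![0,1,2,3,4], pp ![4,1,3,2,0] ![4,1,3,2,0], pp ![2,1,4,0,3] ![3,1,0,4,2], pp ![3,1,0,4,2] ![2,1,4,0,3]],
[pp ![0,1,2,3,4] ![0,1,2,3,4], pp ![3,1,4,2,0] ![4,1,3,0,2], pp ![2,1,0,4,3] ![2,1,0,4,3], pp ![4,1,3,0,2] ![3,1,4,2,0]],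
[pp ![0,1,2,3,4] ![0,1,2,3,4], pp ![0,4,1,2,3] ![0,2,3,4,1], pp ![0,2,3,4,1] ![0,4,1,2,3], pp ![0,3,4,1,2] ![0,3,4,1,2]],
[pp ![0,1,2,3,4] ![0,1,2,3,4], pp ![0,2,4,1,3] ![0,3,1,4,2], pp ![0,4,3,2,1] ![0,4,3,2,1], pp ![0,3,1,4,2] ![0,2,4,1,3]],
[pp ![0,1,2,3,4] ![0,1,2,3,4], pp ![0,2,1,4,3] ![0,2,1,4,3], pp ![0,3,4,2,1] ![0,4,3,1,2], pp ![0,4,3,1,2] ![0,3,4,2,1]],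
[pp ![0,1,2,3,4] ![0,1,2,3,4], pp ![1,2,3,4,0] ![4,0,1,2,3], pp ![4,0,1,2,3] ![1,2,3,4,0], pp ![2,3,4,0,1] ![3,4,0,1,2], pp ![3,4,0,1,2] ![2,3,4,0,1]],
[pp ![0,1,2,3,4] ![0,1,2,3,4], pp ![2,4,3,1,0] ![4,3,0,2,1], pp ![1,2,4,0,3] ![3,0,1,4,2], pp ![4,3,0,2,1] ![2,4,3,1,0], pp ![3,0,1,4,2] ![1,2,4,0,3]],
[pp ![0,1,2,3,4] ![0,1,2,3,4], pp ![1,3,4,2,0] ![4,0,3,1,2], pp ![2,4,1,0,3] ![3,2,0,4,1], pp ![3,2,0,4,1] ![2,4,1,0,3], pp ![4,0,3,1,2] ![1,3,4,2,0]],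
[pp ![0,1,2,3,4] ![0,1,2,3,4], pp ![3,4,1,2,0] ![4,2,3,0,1], pp ![2,0,4,1,3] ![1,3,0,4,2], pp ![4,2,3,0,1] ![3,4,1,2,0], pp ![1,3,0,4,2] ![2,0,4,1,3]],
[pp ![0,1,2,3,4] ![0,1,2,3,4], pp ![2,3,1,4,0] ![4,2,0,1,3], pp ![4,2,0,1,3] ![2,3,1,4,0], pp ![3,0,4,2,1] ![1,4,3,0,2], pp ![1,4,3,0,2] ![3,0,4,2,1]],
[pp ![0,1,2,3,4] ![0,1,2,3,4], pp ![3,2,4,1,0] ![4,3,1,0,2], pp ![1,4,0,2,3] ![2,0,3,4,1], pp ![2,0,3,4,1] ![1,4,0,2,3], pp ![4,3,1,0,2] ![3,2,4,1,0]]]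

/-- A witness set of 31 pairwise non-commuting elements. -/
def wit : List (Equiv.Perm (Fin 5)) :=
[pp ![1,0,3,4,2] ![1,0,4,2,3], pp ![2,3,0,4,1] ![2,4,0,1,3], pp ![3,2,4,0,1] ![3,4,1,0,2],
 pp ![4,2,3,1,0] ![4,3,1,2,0], pp ![3,2,1,4,0] ![4,2,1,0,3], pp ![2,3,4,1,0] ![4,3,0,1,2],
 pp ![2,4,3,0,1] ![3,4,0,2,1], pp ![1,4,3,2,0] ![4,0,3,2,1], pp ![1,3,4,0,2] ![3,0,4,1,2],
 pp ![1,2,0,4,3] ![2,0,1,4,3], pp ![1,2,3,0,4] ![3,0,1,2,4], pp ![1,3,0,2,4] ![2,0,3,1,4],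
 pp ![2,3,1,0,4] ![3,2,0,1,4], pp ![1,2,4,3,0] ![4,0,1,3,2], pp ![1,4,0,3,2] ![2,0,4,3,1],
 pp ![2,4,1,3,0] ![4,2,0,3,1], pp ![1,3,2,4,0] ![4,0,2,1,3], pp ![1,4,2,0,3] ![3,0,2,4,1],
 pp ![3,4,2,1,0] ![4,3,2,0,1], pp ![2,1,3,4,0] ![4,1,0,2,3], pp ![2,1,4,0,3] ![3,1,0,4,2],
 pp ![3,1,4,2,0] ![4,1,3,0,2], pp ![0,2,3,4,1] ![0,4,1,2,3], pp ![0,2,4,1,3] ![0,3,1,4,2],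
 pp ![0,3,4,2,1] ![0,4,3,1,2], pp ![1,2,3,4,0] ![4,0,1,2,3], pp ![1,2,4,0,3] ![3,0,1,4,2],
 pp ![1,3,4,2,0] ![4,0,3,1,2], pp ![1,3,0,4,2] ![2,0,4,1,3], pp ![1,4,3,0,2] ![3,0,4,2,1],
 pp ![1,4,0,2,3] ![2,0,3,4,1]]

set_option maxRecDepth 100000 in
set_option maxHeartbeats 4000000 in
lemma cover : ∀ g : Equiv.Perm (Fin 5), ∃ c ∈ cents, g ∈ c := by decide

set_option maxRecDepth 100000 in
set_option maxHeartbeats 4000000 in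
lemma abel : ∀ c ∈ cents, ∀ x ∈ c, ∀ y ∈ c, x * y = y * x := by decide

set_option maxRecDepth 100000 in
set_option maxHeartbeats 4000000 in
lemma wit_pw : ∀ a ∈ wit, ∀ b ∈ wit, a = b ∨ a * b ≠ b * a := by decide

set_option maxRecDepth 100000 in
set_option maxHeartbeats 4000000 in
lemma wit_nodup : wit.Nodup := by decide

lemma cents_len : cents.length = 31 := rfl

lemma upper (s : Finset (Equiv.Perm (Fin 5))) (hs : pwNC s) : s.card ≤ 31 := by
  classical
  have : s.card ≤ (Finset.range 31).card := by
    apply Finset.card_le_card_of_injOn (fun g => cents.findIdx (fun c => decide (g ∈ c)))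
    · intro a _
      simp only [Finset.mem_range]
      obtain ⟨c, hc, hm⟩ := cover a
      have := List.findIdx_lt_length_of_exists (p := fun c => decide (a ∈ c))
        ⟨c, hc, decide_eq_true hm⟩
      rw [cents_len] at this
      simpa using this
    · intro a ha b hb hfab
      by_contra hne
      obtain ⟨c, hc, hm⟩ := cover a
      have hlt : cents.findIdx (fun c => decide (a ∈ c)) < cents.length :=
        List.findIdx_lt_length_of_exists ⟨c, hc, decide_eq_true hm⟩
      obtain ⟨c', hc', hm'⟩ := cover b
      have hlt' : cents.findIdx (fun c => decide (b ∈ c)) < cents.length :=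
        List.findIdx_lt_length_of_exists ⟨c', hc', decide_eq_true hm'⟩
      have hma : a ∈ cents[cents.findIdx (fun c => decide (a ∈ c))] :=
        of_decide_eq_true (List.findIdx_getElem (w := hlt))
      have hmb : b ∈ cents[cents.findIdx (fun c => decide (b ∈ c))] :=
        of_decide_eq_true (List.findIdx_getElem (w := hlt'))
      have hmb2 : b ∈ cents[cents.findIdx (fun c => decide (a ∈ c))]'hlt := by
        have h2 : ∀ (k) (hk : k < cents.length),
            k = cents.findIdx (fun c => decide (b ∈ c)) → b ∈ cents[k] := by
          intro k hk hkEq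
          subst hkEq
          exact hmb
        exact h2 _ hlt hfab
      have hcomm := abel _ (cents.getElem_mem hlt) a hma b hmb2
      exact hs (Finset.mem_coe.2 ha) (Finset.mem_coe.2 hb) hne hcomm
  simpa using this

/-- ω(S₅) = 31 (note PGL(2,5) ≅ S₅). -/
theorem stmt3 : omegaNC (Equiv.Perm (Fin 5)) = 31 := by
  classical
  have hub : ∀ n ∈ {n : ℕ | ∃ s : Finset (Equiv.Perm (Fin 5)), pwNC s ∧ s.card = n},
      n ≤ 31 := by
    rintro n ⟨s, h1, rfl⟩
    exact upper s h1
  have hmem : (31 : ℕ) ∈ {n : ℕ | ∃ s : Finset (Equiv.Perm (Fin 5)), pwNC s ∧ s.card = n} := by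
    refine ⟨wit.toFinset, ?_, ?_⟩
    · intro a ha b hb hne
      rcases wit_pw a (List.mem_toFinset.1 (Finset.mem_coe.1 ha))
        b (List.mem_toFinset.1 (Finset.mem_coe.1 hb)) with h | h
      · exact absurd h hne
      · exact h
    · rw [List.toFinset_card_of_nodup wit_nodup]; rfl
  exact le_antisymm
    (csSup_le ⟨31, hmem⟩ hub)
    (le_csSup ⟨31, hub⟩ hmem)
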